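/- Fix n ≥ 1 and let the additive group ℤ act on S^n × ℝ by k • (p, t) = (((−1)^k) • p, t + k·π), where ((−1)^k) • p equals p when k is even and −p when k is odd. This is a continuous action by homeomorphisms, and the quotient space (S^n × ℝ) / ℤ, with the quotient topology, is a compact Hausdorff topological space. -/

import Mathlib

/-- The action of `k : ℤ` on the Einstein cylinder `S^n × ℝ`, sending `(p, t)` to
`((-1)^k • p, t + k·π)`. -/
noncomputable def einsteinShift (n : ℕ) (k : ℤ)
    (x : Metric.sphere (0 : EuclideanSpace ℝ (Fin (n + 1))) 1 × ℝ) :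
    Metric.sphere (0 : EuclideanSpace ℝ (Fin (n + 1))) 1 × ℝ :=
  (⟨((-1 : ℝ) ^ k) • (x.1 : EuclideanSpace ℝ (Fin (n + 1))), by
      have hx : ‖(x.1 : EuclideanSpace ℝ (Fin (n + 1)))‖ = 1 := by
        exact mem_sphere_zero_iff_norm.mp x.1.2
      have habs : |(-1 : ℝ) ^ k| = 1 := by
        rcases Int.even_or_odd k with h | h
        · rw [h.neg_one_zpow, abs_one]
        · rw [h.neg_one_zpow, abs_neg, abs_one]
      simp only [Metric.mem_sphere, dist_zero_right, norm_smul, hx, mul_one,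
        Real.norm_eq_abs, habs]⟩,
    x.2 + k * Real.pi)

/-- The Einstein cylinder `S^n × ℝ`. -/
abbrev Cyl (n : ℕ) := Metric.sphere (0 : EuclideanSpace ℝ (Fin (n + 1))) 1 × ℝ

lemma einsteinShift_zero (n : ℕ) (x : Cyl n) : einsteinShift n 0 x = x := by
  refine Prod.ext (Subtype.ext ?_) ?_
  · simp [einsteinShift]
  · simp [einsteinShift]

lemma einsteinShift_add (n : ℕ) (k l : ℤ) (x : Cyl n) :
    einsteinShift n (k + l) x = einsteinShift n k (einsteinShift n l x) := by
  refine Prod.ext (Subtype.ext ?_) ?_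
  · show ((-1 : ℝ) ^ (k + l)) • _ = ((-1 : ℝ) ^ k) • (((-1 : ℝ) ^ l) • _)
    rw [smul_smul, ← zpow_add₀ (by norm_num : (-1 : ℝ) ≠ 0)]
  · show x.2 + (↑(k + l)) * Real.pi = (x.2 + l * Real.pi) + k * Real.pi
    push_cast; ring

lemma continuous_einsteinShift (n : ℕ) (k : ℤ) : Continuous (einsteinShift n k) := by
  refine Continuous.prodMk (Continuous.subtype_mk ?_ _) (continuous_snd.add continuous_const)
  exact (continuous_subtype_val.comp continuous_fst :
    Continuous fun x : Cyl n => (x.1 : EuclideanSpace ℝ (Fin (n + 1)))).const_smul ((-1 : ℝ) ^ k)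

noncomputable instance (n : ℕ) : SMul (Multiplicative ℤ) (Cyl n) :=
  ⟨fun g x => einsteinShift n g.toAdd x⟩

lemma msmul_def (n : ℕ) (g : Multiplicative ℤ) (x : Cyl n) :
    g • x = einsteinShift n g.toAdd x := rfl

noncomputable instance (n : ℕ) : MulAction (Multiplicative ℤ) (Cyl n) where
  one_smul x := einsteinShift_zero n x
  mul_smul g h x := einsteinShift_add n g.toAdd h.toAdd x

instance (n : ℕ) : ContinuousConstSMul (Multiplicative ℤ) (Cyl n) :=
  ⟨fun g => continuous_einsteinShift n g.toAdd⟩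

lemma exists_bounds {n : ℕ} {K : Set (Cyl n)} (hK : IsCompact K) :
    ∃ a b : ℝ, ∀ x ∈ K, a ≤ x.2 ∧ x.2 ≤ b := by
  obtain ⟨b, hb⟩ := (hK.image continuous_snd).bddAbove
  obtain ⟨a, ha⟩ := (hK.image continuous_snd).bddBelow
  exact ⟨a, b, fun x hx => ⟨ha ⟨x, hx, rfl⟩, hb ⟨x, hx, rfl⟩⟩⟩

instance (n : ℕ) : ProperlyDiscontinuousSMul (Multiplicative ℤ) (Cyl n) where
  finite_disjoint_inter_image {K L} hK hL := by
    obtain ⟨a, b, hab⟩ := exists_bounds hK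
    obtain ⟨c, d, hcd⟩ := exists_bounds hL
    have hsub : { γ : Multiplicative ℤ | (γ • ·) '' K ∩ L ≠ ∅ } ⊆
        Multiplicative.toAdd ⁻¹' (Set.Icc ⌈(c - b) / Real.pi⌉ ⌊(d - a) / Real.pi⌋) := by
      intro γ hγ
      rw [Set.mem_setOf_eq, ← Set.nonempty_iff_ne_empty] at hγ
      obtain ⟨y, ⟨x, hxK, rfl⟩, hyL⟩ := hγ
      have h2 : (γ • x).2 = x.2 + (γ.toAdd : ℝ) * Real.pi := rfl
      obtain ⟨hc, hd⟩ := hcd _ hyL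
      obtain ⟨ha, hb⟩ := hab _ hxK
      rw [h2] at hc hd
      have hpi := Real.pi_pos
      constructor
      · rw [Int.ceil_le, div_le_iff₀ hpi]; linarith
      · rw [Int.le_floor, le_div_iff₀ hpi]; linarith
    exact Set.Finite.subset ((Set.finite_Icc _ _).preimage
      (Multiplicative.toAdd.injective.injOn)) (fun γ hγ => hsub (Set.nonempty_iff_ne_empty.mp hγ))

/-- For `n ≥ 1`, the maps `k • (p, t) = ((-1)^k • p, t + k·π)` define an action
of `ℤ` on `S^n × ℝ` by homeomorphisms, and the quotient space `(S^n × ℝ) / ℤ` with the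
quotient topology is a compact Hausdorff topological space. -/
theorem stmt_5 (n : ℕ) (hn : 1 ≤ n) :
    (∀ x : Metric.sphere (0 : EuclideanSpace ℝ (Fin (n + 1))) 1 × ℝ,
        einsteinShift n 0 x = x) ∧
    (∀ (k l : ℤ) (x : Metric.sphere (0 : EuclideanSpace ℝ (Fin (n + 1))) 1 × ℝ),
        einsteinShift n (k + l) x = einsteinShift n k (einsteinShift n l x)) ∧
    (∀ k : ℤ, IsHomeomorph (einsteinShift n k)) ∧
    CompactSpace
      (Quot fun x y : Metric.sphere (0 : EuclideanSpace ℝ (Fin (n + 1))) 1 × ℝ =>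
        ∃ k : ℤ, y = einsteinShift n k x) ∧
    T2Space
      (Quot fun x y : Metric.sphere (0 : EuclideanSpace ℝ (Fin (n + 1))) 1 × ℝ =>
        ∃ k : ℤ, y = einsteinShift n k x) := by
  refine ⟨einsteinShift_zero n, einsteinShift_add n, fun k => ?_, ?_, ?_⟩
  · exact (Homeomorph.mk ⟨einsteinShift n k, einsteinShift n (-k),
        fun x => by rw [← einsteinShift_add, neg_add_cancel, einsteinShift_zero],
        fun x => by rw [← einsteinShift_add, add_neg_cancel, einsteinShift_zero]⟩
      (continuous_einsteinShift n k) (continuous_einsteinShift n (-k))).isHomeomorph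
  · refine ⟨?_⟩
    have key : (Set.univ : Set (Quot fun x y : Cyl n => ∃ k : ℤ, y = einsteinShift n k x)) =
        Quot.mk _ '' (Set.univ ×ˢ Set.Icc 0 Real.pi) := by
      refine Set.eq_of_subset_of_subset ?_ (Set.subset_univ _)
      rintro q -
      obtain ⟨x, rfl⟩ := Quot.exists_rep q
      have hpi := Real.pi_pos
      have h1 : (⌊x.2 / Real.pi⌋ : ℝ) * Real.pi ≤ x.2 := by
        rw [← le_div_iff₀ hpi]; exact Int.floor_le _
      have h2 : x.2 < ((⌊x.2 / Real.pi⌋ : ℝ) + 1) * Real.pi := by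
        rw [← div_lt_iff₀ hpi]; exact Int.lt_floor_add_one _
      refine ⟨einsteinShift n (-⌊x.2 / Real.pi⌋) x, ⟨Set.mem_univ _, ?_, ?_⟩,
        (Quot.sound ⟨-⌊x.2 / Real.pi⌋, rfl⟩).symm⟩
      · show (0 : ℝ) ≤ x.2 + ((-⌊x.2 / Real.pi⌋ : ℤ) : ℝ) * Real.pi
        push_cast; linarith
      · show x.2 + ((-⌊x.2 / Real.pi⌋ : ℤ) : ℝ) * Real.pi ≤ Real.pi
        push_cast; linarith
    rw [key]
    exact (isCompact_univ.prod isCompact_Icc).image continuous_quot_mk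
  · have hrel : (fun x y : Cyl n => ∃ k : ℤ, y = einsteinShift n k x) =
        fun x y => Setoid.r (self := MulAction.orbitRel (Multiplicative ℤ) (Cyl n)) x y := by
      funext x y
      apply propext
      rw [show (Setoid.r (self := MulAction.orbitRel (Multiplicative ℤ) (Cyl n)) x y) =
        (x ∈ MulAction.orbit (Multiplicative ℤ) y) from rfl, MulAction.mem_orbit_iff]
      constructor
      · rintro ⟨k, rfl⟩
        refine ⟨Multiplicative.ofAdd (-k), ?_⟩
        show einsteinShift n (-k) (einsteinShift n k x) = x
        rw [← einsteinShift_add, neg_add_cancel, einsteinShift_zero]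
      · rintro ⟨g, rfl⟩
        refine ⟨-g.toAdd, ?_⟩
        rw [msmul_def, ← einsteinShift_add, neg_add_cancel, einsteinShift_zero]
    rw [hrel]
    exact inferInstanceAs (T2Space (Quotient (MulAction.orbitRel (Multiplicative ℤ) (Cyl n))))
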